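/- Let δ ≥ 3 be an integer and let q_k < q_{k+1} be consecutive primes satisfying q_k − δ + 1 ≥ (δ − 1)(q_{k+1} − (q_k − δ + 1)). Then L = 2^{q_k − δ} · q_k · q_{k+1} is a covering number. -/

import Mathlib

/-- A finite set of congruences `(x, m)` covers all the integers. -/
def CoversAll (S : Finset (ℕ × ℕ)) : Prop :=
  ∀ z : ℤ, ∃ c ∈ S, (c.2 : ℤ) ∣ z - (c.1 : ℤ)

/-- The moduli appearing in `S` are pairwise distinct. -/
def DistinctModuli (S : Finset (ℕ × ℕ)) : Prop :=
  ∀ c ∈ S, ∀ c' ∈ S, c.2 = c'.2 → c = c'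

/-- `L` is a covering number: there is a covering system whose moduli are
distinct divisors of `L` greater than `1`. -/
def IsCoveringNumber (L : ℕ) : Prop :=
  ∃ S : Finset (ℕ × ℕ), CoversAll S ∧ DistinctModuli S ∧
    ∀ c ∈ S, 1 < c.2 ∧ c.2 ∣ L

/-- `L` is a primitive covering number. -/
def IsPrimitiveCoveringNumber (L : ℕ) : Prop :=
  IsCoveringNumber L ∧ ∀ d : ℕ, d ∣ L → d ≠ L → ¬ IsCoveringNumber d

private lemma crt2 (m k : ℕ) (hm : 0 < m) (hk : 0 < k) (h : Nat.Coprime m k) (a b : ℤ) :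
    ∃ x : ℕ, (m:ℤ) ∣ (x:ℤ) - a ∧ (k:ℤ) ∣ (x:ℤ) - b := by
  obtain ⟨x, hx1, hx2⟩ := Nat.chineseRemainder h (a % m).toNat (b % k).toNat
  refine ⟨x, ?_, ?_⟩
  · have h1 : (m:ℤ) ∣ (x:ℤ) - ((a % m).toNat : ℤ) := by
      have := (Nat.modEq_iff_dvd (n := m)).mp hx1.symm
      exact_mod_cast this
    have h2 : (m:ℤ) ∣ ((a % m).toNat : ℤ) - a := by
      rw [Int.toNat_of_nonneg (Int.emod_nonneg a (by exact_mod_cast hm.ne'))]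
      rw [Int.emod_def]; exact ⟨-(a/m), by ring⟩
    have := dvd_add h1 h2
    simpa using this
  · have h1 : (k:ℤ) ∣ (x:ℤ) - ((b % k).toNat : ℤ) := by
      have := (Nat.modEq_iff_dvd (n := k)).mp hx2.symm
      exact_mod_cast this
    have h2 : (k:ℤ) ∣ ((b % k).toNat : ℤ) - b := by
      rw [Int.toNat_of_nonneg (Int.emod_nonneg b (by exact_mod_cast hk.ne'))]
      rw [Int.emod_def]; exact ⟨-(b/k), by ring⟩
    have := dvd_add h1 h2
    simpa using this

private lemma two_adic (n : ℕ) (w : ℤ) :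
    (2^n : ℤ) ∣ w ∨ ∃ i < n, (2^i : ℤ) ∣ w ∧ ¬ (2^(i+1) : ℤ) ∣ w := by
  induction n with
  | zero => left; simp
  | succ n ih =>
    rcases ih with h | ⟨i, hi, h1, h2⟩
    · by_cases h2 : (2^(n+1) : ℤ) ∣ w
      · exact Or.inl h2
      · exact Or.inr ⟨n, Nat.lt_succ_self n, h, h2⟩
    · exact Or.inr ⟨i, hi.trans (Nat.lt_succ_self n), h1, h2⟩

private lemma dvd_diff {d a b c : ℤ} (h1 : d ∣ a - c) (h2 : d ∣ b - c) : d ∣ a - b := by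
  have := dvd_sub h1 h2
  simpa [sub_sub_sub_cancel_right] using this

theorem counterexample_construction_is_covering_number
    (δ q q' : ℕ) (hδ : 3 ≤ δ)
    (hq : q.Prime) (hq' : q'.Prime) (hlt : q < q')
    (hconsec : ∀ m : ℕ, q < m → m < q' → ¬ m.Prime)
    (hineq : (q : ℤ) - δ + 1 ≥ ((δ : ℤ) - 1) * ((q' : ℤ) - ((q : ℤ) - δ + 1))) :
    IsCoveringNumber (2 ^ (q - δ) * q * q') := by
  clear hconsec
  -- arithmetic groundwork
  have hq'q : (q:ℤ) + 1 ≤ q' := by exact_mod_cast hlt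
  have hδ' : (3:ℤ) ≤ δ := by exact_mod_cast hδ
  have hδqZ : (δ:ℤ) + 5 ≤ q := by nlinarith
  have hδq : δ + 5 ≤ q := by exact_mod_cast hδqZ
  set N := q - δ with hNdef
  have hqN : q = N + δ := by omega
  have hNcast : (N:ℤ) = (q:ℤ) - δ := by
    have : (q:ℤ) = (N:ℤ) + δ := by exact_mod_cast hqN
    linarith
  have hN5 : 5 ≤ N := by omega
  have hNq : N + 1 ≤ q := by omega
  have hNq' : N + 2 ≤ q' := by omega
  set B := q' - (N+1) with hBdef
  have hBpos : 0 < B := by omega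
  have hBcast : (B:ℤ) = (q':ℤ) - (N+1) := by
    have hB' : q' = B + (N+1) := by omega
    have : (q':ℤ) = (B:ℤ) + (N+1) := by exact_mod_cast hB'
    push_cast at this ⊢; linarith
  set K := (δ - 1) * B with hKdef
  have hKN : K ≤ N + 1 := by
    have hKcast : (K:ℤ) = ((δ:ℤ) - 1) * ((q':ℤ) - ((N:ℤ)+1)) := by
      have h1 : (K:ℤ) = ((δ - 1 : ℕ):ℤ) * (B:ℤ) := by exact_mod_cast rfl
      have h2 : ((δ - 1 : ℕ):ℤ) = (δ:ℤ) - 1 := by omega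
      rw [h1, h2, hBcast]
    have : (K:ℤ) ≤ (N:ℤ) + 1 := by
      rw [hKcast, hNcast]
      have : (q':ℤ) - ((q:ℤ) - δ + 1) = (q':ℤ) - (((q:ℤ) - δ) + 1) := by ring
      nlinarith [hineq]
    exact_mod_cast this
  -- primality facts
  have hq2 : q ≠ 2 := by omega
  have hq'2 : q' ≠ 2 := by omega
  have hqq' : q ≠ q' := hlt.ne
  have hqpow : ∀ a : ℕ, ¬ q ∣ 2^a := by
    intro a h
    exact hq2 ((Nat.prime_dvd_prime_iff_eq hq Nat.prime_two).mp (hq.dvd_of_dvd_pow h))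
  have hq'pow : ∀ a : ℕ, ¬ q' ∣ 2^a := by
    intro a h
    exact hq'2 ((Nat.prime_dvd_prime_iff_eq hq' Nat.prime_two).mp (hq'.dvd_of_dvd_pow h))
  have hq'ndvd : ∀ a : ℕ, ¬ q' ∣ 2^a * q := by
    intro a h
    rcases (Nat.Prime.dvd_mul hq').mp h with h | h
    · exact hq'pow a h
    · exact hqq' ((Nat.prime_dvd_prime_iff_eq hq' hq).mp h).symm
  have hqndvd' : ∀ a : ℕ, ¬ q ∣ 2^a * q' := by
    intro a h
    rcases (Nat.Prime.dvd_mul hq).mp h with h | h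
    · exact hqpow a h
    · exact hqq' ((Nat.prime_dvd_prime_iff_eq hq hq').mp h)
  -- coprimality
  have hc2q : Nat.Coprime 2 q := (Nat.coprime_primes Nat.prime_two hq).mpr (Ne.symm hq2)
  have hc2q' : Nat.Coprime 2 q' := (Nat.coprime_primes Nat.prime_two hq').mpr (Ne.symm hq'2)
  have hcqq' : Nat.Coprime q q' := (Nat.coprime_primes hq hq').mpr hqq'
  have hicq : ∀ a : ℕ, IsCoprime ((2:ℤ)^a) (q:ℤ) := by
    intro a
    have : Nat.Coprime (2^a) q := Nat.Coprime.pow_left a hc2q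
    have := Nat.isCoprime_iff_coprime.mpr this
    push_cast at this; exact this
  have hicq' : ∀ a : ℕ, IsCoprime ((2:ℤ)^a) (q':ℤ) := by
    intro a
    have : Nat.Coprime (2^a) q' := Nat.Coprime.pow_left a hc2q'
    have := Nat.isCoprime_iff_coprime.mpr this
    push_cast at this; exact this
  have hicqq' : IsCoprime ((q:ℤ)) ((q':ℤ)) := Nat.isCoprime_iff_coprime.mpr hcqq'
  -- choose residues
  have hBex : ∀ i : ℕ, ∃ x : ℕ, ((2:ℤ)^i) ∣ (x:ℤ) - (-1) ∧ (q:ℤ) ∣ (x:ℤ) - (-1 + 2^N * i) := by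
    intro i
    obtain ⟨x, h1, h2⟩ := crt2 (2^i) q (pow_pos (by norm_num) i) hq.pos
      (Nat.Coprime.pow_left i hc2q) (-1) (-1 + 2^N * i)
    exact ⟨x, by push_cast at h1 ⊢; exact h1, h2⟩
  choose xB hB1 hB2 using hBex
  have hCex : ∀ i : ℕ, ∃ x : ℕ, ((2:ℤ)^i) ∣ (x:ℤ) - (-1) ∧ (q':ℤ) ∣ (x:ℤ) - (-1 + 2^N * i) := by
    intro i
    obtain ⟨x, h1, h2⟩ := crt2 (2^i) q' (pow_pos (by norm_num) i) hq'.pos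
      (Nat.Coprime.pow_left i hc2q') (-1) (-1 + 2^N * i)
    exact ⟨x, by push_cast at h1 ⊢; exact h1, h2⟩
  choose xC hC1 hC2 using hCex
  have hDex : ∀ j : ℕ, ∃ x : ℕ, ((2:ℤ)^j) ∣ (x:ℤ) - (-1) ∧
      (q:ℤ) ∣ (x:ℤ) - (-1 + 2^N * ((N+1+j/B : ℕ) : ℤ)) ∧ (q':ℤ) ∣ (x:ℤ) - (-1 + 2^N * ((N+1+j%B : ℕ) : ℤ)) := by
    intro j
    obtain ⟨y, hy1, hy2⟩ := crt2 q q' hq.pos hq'.pos hcqq'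
      (-1 + 2^N * ((N+1+j/B : ℕ) : ℤ)) (-1 + 2^N * ((N+1+j%B : ℕ) : ℤ))
    obtain ⟨x, h1, h2⟩ := crt2 (2^j) (q*q') (pow_pos (by norm_num) j)
      (Nat.mul_pos hq.pos hq'.pos)
      (Nat.Coprime.mul_right (Nat.Coprime.pow_left j hc2q) (Nat.Coprime.pow_left j hc2q')) (-1) y
    push_cast at h1 h2
    refine ⟨x, h1, ?_, ?_⟩
    · have hxy : (q:ℤ) ∣ (x:ℤ) - y := dvd_trans ⟨(q':ℤ), rfl⟩ h2
      have := dvd_add hxy hy1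
      simpa using this
    · have hxy : (q':ℤ) ∣ (x:ℤ) - y := dvd_trans ⟨(q:ℤ), mul_comm _ _⟩ h2
      have := dvd_add hxy hy2
      simpa using this
  choose xD hD1 hD2 hD3 using hDex
  -- the covering system
  set S : Finset (ℕ × ℕ) :=
    (((Finset.range N).image fun i => (2^i - 1, 2^(i+1))) ∪
     ((Finset.range (N+1)).image fun i => (xB i, 2^i * q)) ∪
     ((Finset.range (N+1)).image fun i => (xC i, 2^i * q')) ∪
     ((Finset.range K).image fun j => (xD j, 2^j * (q * q')))) with hSdef
  have memS : ∀ c : ℕ × ℕ, c ∈ S ↔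
      (∃ i < N, (2^i - 1, 2^(i+1)) = c) ∨ (∃ i < N + 1, (xB i, 2^i * q) = c) ∨
      (∃ i < N + 1, (xC i, 2^i * q') = c) ∨ (∃ j < K, (xD j, 2^j * (q * q')) = c) := by
    intro c
    simp [hSdef, Finset.mem_union, Finset.mem_image, Finset.mem_range, or_assoc]
  refine ⟨S, ?_, ?_, ?_⟩
  · -- CoversAll
    intro z
    rcases two_adic N (z+1) with hdvd | ⟨i, hi, h1, h2⟩
    · -- leftover class z ≡ -1 (mod 2^N)
      obtain ⟨t, ht⟩ := hdvd
      have hqZ : (0:ℤ) < q := by exact_mod_cast hq.pos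
      have hq'Z : (0:ℤ) < q' := by exact_mod_cast hq'.pos
      set r : ℕ := (t % (q:ℤ)).toNat with hrdef
      set s : ℕ := (t % (q':ℤ)).toNat with hsdef
      have hr0 : ((r:ℕ):ℤ) = t % (q:ℤ) := Int.toNat_of_nonneg (Int.emod_nonneg t hqZ.ne')
      have hs0 : ((s:ℕ):ℤ) = t % (q':ℤ) := Int.toNat_of_nonneg (Int.emod_nonneg t hq'Z.ne')
      have hrlt : r < q := by
        have := Int.emod_lt_of_pos t hqZ
        omega
      have hslt : s < q' := by
        have := Int.emod_lt_of_pos t hq'Z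
        omega
      have hrq : (q:ℤ) ∣ t - r := ⟨t / q, by rw [hr0, Int.emod_def]; ring⟩
      have hsq : (q':ℤ) ∣ t - s := ⟨t / q', by rw [hs0, Int.emod_def]; ring⟩
      by_cases hrN : r ≤ N
      · -- family B
        refine ⟨(xB r, 2^r * q), (memS _).mpr (Or.inr (Or.inl ⟨r, by omega, rfl⟩)), ?_⟩
        have hz1 : (2:ℤ)^r ∣ z - (-1) := by
          have h1 : (2:ℤ)^r ∣ (2:ℤ)^N := pow_dvd_pow 2 hrN
          have : (2:ℤ)^r ∣ z + 1 := by rw [ht]; exact h1.mul_right t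
          simpa [sub_neg_eq_add] using this
        have h2part : (2:ℤ)^r ∣ z - (xB r : ℤ) := dvd_diff hz1 (hB1 r)
        have hzq : (q:ℤ) ∣ z - (-1 + 2^N * r) := by
          obtain ⟨w, hw⟩ := hrq
          exact ⟨2^N * w, by linear_combination ht + (2:ℤ)^N * hw⟩
        have hqpart : (q:ℤ) ∣ z - (xB r : ℤ) := dvd_diff hzq (hB2 r)
        have key : ((2:ℤ)^r * q) ∣ z - (xB r : ℤ) := (hicq r).mul_dvd h2part hqpart
        push_cast
        exact key
      · by_cases hsN : s ≤ N
        · -- family C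
          refine ⟨(xC s, 2^s * q'), (memS _).mpr (Or.inr (Or.inr (Or.inl ⟨s, by omega, rfl⟩))), ?_⟩
          have hz1 : (2:ℤ)^s ∣ z - (-1) := by
            have h1 : (2:ℤ)^s ∣ (2:ℤ)^N := pow_dvd_pow 2 hsN
            have : (2:ℤ)^s ∣ z + 1 := by rw [ht]; exact h1.mul_right t
            simpa [sub_neg_eq_add] using this
          have h2part : (2:ℤ)^s ∣ z - (xC s : ℤ) := dvd_diff hz1 (hC1 s)
          have hzq : (q':ℤ) ∣ z - (-1 + 2^N * s) := by
            obtain ⟨w, hw⟩ := hsq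
            exact ⟨2^N * w, by linear_combination ht + (2:ℤ)^N * hw⟩
          have hqpart : (q':ℤ) ∣ z - (xC s : ℤ) := dvd_diff hzq (hC2 s)
          have key : ((2:ℤ)^s * q') ∣ z - (xC s : ℤ) := (hicq' s).mul_dvd h2part hqpart
          push_cast
          exact key
        · -- family D
          set j : ℕ := B * (r - (N+1)) + (s - (N+1)) with hjdef
          have hsb : s - (N+1) < B := by omega
          have hjK : j < K := by
            have haδ : (r - (N+1)) + 1 ≤ δ - 1 := by omega
            calc j < B * (r - (N+1)) + B := by omega
              _ = B * ((r - (N+1)) + 1) := by ring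
              _ ≤ B * (δ - 1) := Nat.mul_le_mul_left B haδ
              _ = (δ - 1) * B := mul_comm _ _
          have hjr : N + 1 + j / B = r := by
            rw [hjdef, Nat.mul_add_div hBpos, Nat.div_eq_of_lt hsb]
            omega
          have hjs : N + 1 + j % B = s := by
            rw [hjdef, Nat.mul_add_mod, Nat.mod_eq_of_lt hsb]
            omega
          refine ⟨(xD j, 2^j * (q * q')), (memS _).mpr (Or.inr (Or.inr (Or.inr ⟨j, hjK, rfl⟩))), ?_⟩
          have hjN : j ≤ N := by omega
          have hz1 : (2:ℤ)^j ∣ z - (-1) := by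
            have h1 : (2:ℤ)^j ∣ (2:ℤ)^N := pow_dvd_pow 2 hjN
            have : (2:ℤ)^j ∣ z + 1 := by rw [ht]; exact h1.mul_right t
            simpa [sub_neg_eq_add] using this
          have h2part : (2:ℤ)^j ∣ z - (xD j : ℤ) := dvd_diff hz1 (hD1 j)
          have hD2' := hD2 j
          rw [hjr] at hD2'
          have hD3' := hD3 j
          rw [hjs] at hD3'
          have hzq : (q:ℤ) ∣ z - (-1 + 2^N * r) := by
            obtain ⟨w, hw⟩ := hrq
            exact ⟨2^N * w, by linear_combination ht + (2:ℤ)^N * hw⟩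
          have hzq' : (q':ℤ) ∣ z - (-1 + 2^N * s) := by
            obtain ⟨w, hw⟩ := hsq
            exact ⟨2^N * w, by linear_combination ht + (2:ℤ)^N * hw⟩
          have hqpart : (q:ℤ) ∣ z - (xD j : ℤ) := dvd_diff hzq hD2'
          have hq'part : (q':ℤ) ∣ z - (xD j : ℤ) := dvd_diff hzq' hD3'
          have hqq'part : ((q:ℤ) * q') ∣ z - (xD j : ℤ) := hicqq'.mul_dvd hqpart hq'part
          have key : ((2:ℤ)^j * ((q:ℤ) * q')) ∣ z - (xD j : ℤ) :=
            (IsCoprime.mul_right (hicq j) (hicq' j)).mul_dvd h2part hqq'part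
          push_cast
          exact key
    · -- family A
      refine ⟨(2^i - 1, 2^(i+1)), (memS _).mpr (Or.inl ⟨i, hi, rfl⟩), ?_⟩
      obtain ⟨u, hu⟩ := h1
      have hu_odd : ¬ (2:ℤ) ∣ u := by
        rintro ⟨v, hv⟩
        exact h2 ⟨v, by rw [hu, hv]; ring⟩
      obtain ⟨v, hv⟩ : (2:ℤ) ∣ u - 1 := by
        rcases Int.even_or_odd u with he | ho
        · exact absurd he.two_dvd hu_odd
        · obtain ⟨w, hw⟩ := ho
          exact ⟨w, by omega⟩
      have hcast : (((2^i - 1 : ℕ)):ℤ) = 2^i - 1 := by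
        rw [Nat.cast_sub (Nat.one_le_two_pow)]
        push_cast; ring
      refine ⟨v, ?_⟩
      rw [hcast]
      push_cast
      linear_combination hu + (2:ℤ)^i * hv
  · -- DistinctModuli
    intro c hc c' hc' hmm
    rw [memS] at hc hc'
    rcases hc with ⟨i, hi, rfl⟩ | ⟨i, hi, rfl⟩ | ⟨i, hi, rfl⟩ | ⟨j, hj, rfl⟩ <;>
      rcases hc' with ⟨i', hi', rfl⟩ | ⟨i', hi', rfl⟩ | ⟨i', hi', rfl⟩ | ⟨j', hj', rfl⟩ <;>
      dsimp only at hmm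
    · obtain rfl : i = i' := by
        have := Nat.pow_right_injective (le_refl 2) hmm
        omega
      rfl
    · exfalso; apply hqpow (i+1); rw [hmm]; exact dvd_mul_left q _
    · exfalso; apply hq'pow (i+1); rw [hmm]; exact dvd_mul_left q' _
    · exfalso; apply hqpow (i+1); rw [hmm]; exact ⟨2^j' * q', by ring⟩
    · exfalso; apply hqpow (i'+1); rw [← hmm]; exact dvd_mul_left q _
    · obtain rfl : i = i' :=
        Nat.pow_right_injective (le_refl 2) (Nat.eq_of_mul_eq_mul_right hq.pos hmm)
      rfl
    · exfalso; apply hqndvd' i'; rw [← hmm]; exact dvd_mul_left q _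
    · exfalso; apply hq'ndvd i; rw [hmm]; exact ⟨2^j' * q, by ring⟩
    · exfalso; apply hq'pow (i'+1); rw [← hmm]; exact dvd_mul_left q' _
    · exfalso; apply hq'ndvd i'; rw [← hmm]; exact dvd_mul_left q' _
    · obtain rfl : i = i' :=
        Nat.pow_right_injective (le_refl 2) (Nat.eq_of_mul_eq_mul_right hq'.pos hmm)
      rfl
    · exfalso; apply hqndvd' i; rw [hmm]; exact ⟨2^j' * q', by ring⟩
    · exfalso; apply hqpow (i'+1); rw [← hmm]; exact ⟨2^j * q', by ring⟩
    · exfalso; apply hq'ndvd i'; rw [← hmm]; exact ⟨2^j * q, by ring⟩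
    · exfalso; apply hqndvd' i'; rw [← hmm]; exact ⟨2^j * q', by ring⟩
    · obtain rfl : j = j' :=
        Nat.pow_right_injective (le_refl 2)
          (Nat.eq_of_mul_eq_mul_right (Nat.mul_pos hq.pos hq'.pos) hmm)
      rfl
  · -- divisors
    intro c hc
    rw [memS] at hc
    rcases hc with ⟨i, hi, rfl⟩ | ⟨i, hi, rfl⟩ | ⟨i, hi, rfl⟩ | ⟨j, hj, rfl⟩
    · refine ⟨Nat.one_lt_two_pow (by omega), ?_⟩
      exact dvd_mul_of_dvd_left (dvd_mul_of_dvd_left (pow_dvd_pow 2 (by omega)) q) q'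
    · refine ⟨lt_of_lt_of_le hq.one_lt (Nat.le_mul_of_pos_left q (pow_pos two_pos i)), ?_⟩
      exact dvd_mul_of_dvd_left (mul_dvd_mul (pow_dvd_pow 2 (by omega)) dvd_rfl) q'
    · refine ⟨lt_of_lt_of_le hq'.one_lt (Nat.le_mul_of_pos_left q' (pow_pos two_pos i)), ?_⟩
      have h1 : 2^i * q' ∣ 2^N * q' := mul_dvd_mul (pow_dvd_pow 2 (by omega)) dvd_rfl
      exact h1.trans ⟨q, by ring⟩
    · refine ⟨lt_of_lt_of_le hq.one_lt ?_, ?_⟩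
      · calc q ≤ q * q' := Nat.le_mul_of_pos_right q hq'.pos
          _ ≤ 2^j * (q * q') := Nat.le_mul_of_pos_left _ (pow_pos two_pos j)
      · have h1 : 2^j * (q*q') ∣ 2^N * (q*q') := mul_dvd_mul (pow_dvd_pow 2 (by omega)) dvd_rfl
        exact h1.trans ⟨1, by ring⟩
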